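/- (Theorem 1 of the paper: the MinECC LP is at least as tight as the Node-MC LP.) Let H = (V, E, C, ℓ) be an edge-colored hypergraph with color set C = {1, …, k} and nonnegative weights w_e. Define the graph Ĝ with vertex set V ∪ {v_e : e ∈ E} ∪ {t_1, …, t_k} and edge set consisting of {v, v_e} for every e ∈ E and v ∈ e, together with {t_{ℓ(e)}, v_e} for every e ∈ E. Then for every feasible MinECC LP solution ({x_v^i}, {x_e}) for H there exist reals y_a^j for every vertex a of Ĝ and color j ∈ {1,…,k}, and reals d_a ≥ 0 for every vertex a of Ĝ with d_a = 0 for all a ∈ V ∪ {t_1,…,t_k}, satisfying: y_{t_i}^i = 0 and y_{t_i}^j ≥ 1 for all i ≠ j; and y_a^j ≤ y_b^j + d_a and y_b^j ≤ y_a^j + d_b for every edge {a, b} of Ĝ and every color j; such that ∑_{e∈E} w_e d_{v_e} = ∑_{e∈E} w_e x_e. Consequently the optimal value of the Node-MC LP on Ĝ is at most the optimal value of the MinECC LP on H. -/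

import Mathlib

open scoped Classical

/-- **Theorem 1: the MinECC LP is at least as tight as the Node-MC LP.**
Given an edge-colored hypergraph `H` with colors `Fin k` and nonnegative weights,
form the graph `Ĝ` on the vertices `V ⊕ E ⊕ Fin k` (original nodes, a node `v_e` per
hyperedge, and terminals `t_1, …, t_k`), with edges `{v, v_e}` for `v ∈ e` and
`{t_{ℓ(e)}, v_e}`.  Every feasible MinECC LP solution `(x, xe)` for `H` gives rise to
a feasible Node-MC LP solution `(y, d)` on `Ĝ` (with `d = 0` on `V` and the terminals)
of equal value `∑ w_e d_{v_e} = ∑ w_e xe_e`. -/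
theorem minECC_LP_tighter_than_nodeMC_LP {V E : Type*} [Fintype V] [Fintype E]
    (k : ℕ) (hk : 1 ≤ k)
    (edge : E → Finset V) (hne : ∀ e, (edge e).Nonempty)
    (ℓ : E → Fin k) (w : E → ℝ) (hw : ∀ e, 0 ≤ w e)
    (x : V → Fin k → ℝ) (xe : E → ℝ)
    (hx01 : ∀ v i, x v i ∈ Set.Icc (0 : ℝ) 1)
    (hxsum : ∀ v, ∑ i, x v i = (k : ℝ) - 1)
    (hxe01 : ∀ e, xe e ∈ Set.Icc (0 : ℝ) 1)
    (hxe : ∀ e, ∀ v ∈ edge e, x v (ℓ e) ≤ xe e) :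
    ∃ (y : V ⊕ E ⊕ Fin k → Fin k → ℝ) (d : V ⊕ E ⊕ Fin k → ℝ),
      (∀ a, 0 ≤ d a) ∧
      (∀ v : V, d (Sum.inl v) = 0) ∧
      (∀ i : Fin k, d (Sum.inr (Sum.inr i)) = 0) ∧
      (∀ i : Fin k, y (Sum.inr (Sum.inr i)) i = 0) ∧
      (∀ i j : Fin k, i ≠ j → 1 ≤ y (Sum.inr (Sum.inr i)) j) ∧
      (∀ e : E, ∀ v ∈ edge e, ∀ j : Fin k,
        y (Sum.inl v) j ≤ y (Sum.inr (Sum.inl e)) j + d (Sum.inl v) ∧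
        y (Sum.inr (Sum.inl e)) j ≤ y (Sum.inl v) j + d (Sum.inr (Sum.inl e))) ∧
      (∀ e : E, ∀ j : Fin k,
        y (Sum.inr (Sum.inr (ℓ e))) j ≤
          y (Sum.inr (Sum.inl e)) j + d (Sum.inr (Sum.inr (ℓ e))) ∧
        y (Sum.inr (Sum.inl e)) j ≤
          y (Sum.inr (Sum.inr (ℓ e))) j + d (Sum.inr (Sum.inl e))) ∧
      (∑ e, w e * d (Sum.inr (Sum.inl e)) = ∑ e, w e * xe e) := by
  -- key fact: for distinct colors j, l we have 1 ≤ x v j + x v l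
  have hkey : ∀ (v : V) (j l : Fin k), j ≠ l → 1 ≤ x v j + x v l := by
    intro v j l hjl
    have hk2 : 2 ≤ k := by
      have : 1 < Fintype.card (Fin k) := Fintype.one_lt_card_iff_nontrivial.mpr ⟨⟨j, l, hjl⟩⟩
      simp at this; omega
    have h1 : ∑ i ∈ ({j, l} : Finset (Fin k)), x v i
        + ∑ i ∈ ({j, l} : Finset (Fin k))ᶜ, x v i = (k : ℝ) - 1 := by
      rw [Finset.sum_add_sum_compl]; exact hxsum v
    have hpair : ∑ i ∈ ({j, l} : Finset (Fin k)), x v i = x v j + x v l :=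
      Finset.sum_pair hjl
    have hcard : (({j, l} : Finset (Fin k))ᶜ).card = k - 2 := by
      rw [Finset.card_compl, Finset.card_pair hjl]; simp
    have hbound : ∑ i ∈ ({j, l} : Finset (Fin k))ᶜ, x v i
        ≤ ((k - 2 : ℕ) : ℝ) := by
      calc ∑ i ∈ ({j, l} : Finset (Fin k))ᶜ, x v i
          ≤ (({j, l} : Finset (Fin k))ᶜ).card • (1 : ℝ) :=
            Finset.sum_le_card_nsmul _ _ 1 (fun i _ => (hx01 v i).2)
        _ = ((k - 2 : ℕ) : ℝ) := by rw [hcard]; simp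
    have hcast : ((k - 2 : ℕ) : ℝ) = (k : ℝ) - 2 := by
      push_cast [Nat.cast_sub hk2]; ring
    rw [hcast] at hbound
    rw [hpair] at h1
    linarith
  refine ⟨fun a j => match a with
    | Sum.inl v => x v j
    | Sum.inr (Sum.inl e) => if j = ℓ e then xe e else 1
    | Sum.inr (Sum.inr i) => if j = i then 0 else 1,
    fun a => match a with
    | Sum.inl _ => 0
    | Sum.inr (Sum.inl e) => xe e
    | Sum.inr (Sum.inr _) => 0, ?_, ?_, ?_, ?_, ?_, ?_, ?_, ?_⟩
  · rintro (v | e | i)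
    · exact le_refl 0
    · exact (hxe01 e).1
    · exact le_refl 0
  · intro v; rfl
  · intro i; rfl
  · intro i; simp
  · intro i j hij; simp [hij.symm]
  · intro e v hv j
    by_cases h : j = ℓ e
    · subst h
      simp only [if_pos rfl]
      refine ⟨by simpa using hxe e v hv, ?_⟩
      have := (hx01 v (ℓ e)).1
      simp only [if_true, eq_self_iff_true]
      linarith
    · simp only [if_neg h]
      refine ⟨by linarith [(hx01 v j).2], ?_⟩
      have := hkey v j (ℓ e) h
      have := hxe e v hv
      linarith
  · intro e j
    by_cases h : j = ℓ e
    · subst h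
      simp [(hxe01 e).1]
    · simp only [if_neg h]
      constructor
      · simp [h]
      · have := (hxe01 e).1; simp [h]; linarith
  · rfl
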